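/- arXiv:2106.03350 — 3 statements merged into one kernel-verified Lean document; each statement's English description precedes it below -/
import Mathlib

section
/- For H ∈ (0,1) and all s,t > 0, the sub-fractional covariance C_H(s,t) = s^{2H} + t^{2H} - (1/2)[(s+t)^{2H} + |s-t|^{2H}] is strictly positive. -/
open Real

/-- Subadditivity of `x ↦ x ^ p` on nonnegative reals for `0 ≤ p ≤ 1`. -/
lemma real_rpow_add_le_add_rpow {x y p : ℝ} (hx : 0 ≤ x) (hy : 0 ≤ y)
    (hp : 0 ≤ p) (hp1 : p ≤ 1) : (x + y) ^ p ≤ x ^ p + y ^ p := by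
  have h := NNReal.rpow_add_le_add_rpow x.toNNReal y.toNNReal hp hp1
  have := NNReal.coe_le_coe.2 h
  push_cast at this
  rwa [Real.coe_toNNReal _ hx, Real.coe_toNNReal _ hy] at this

/-- Key derivative inequality. -/
lemma key_ineq {α s u : ℝ} (hα0 : 0 < α) (hα2 : α < 2) (hu : 0 < u) (hus : u < s) :
    (s + u) ^ (α - 1) - (s - u) ^ (α - 1) < 2 * u ^ (α - 1) := by
  have hsu : (0:ℝ) < s - u := by linarith
  have hsu' : (0:ℝ) < s + u := by linarith
  rcases le_or_gt α 1 with h1 | h1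
  · have hle : (s + u) ^ (α - 1) ≤ (s - u) ^ (α - 1) :=
      Real.rpow_le_rpow_of_nonpos hsu (by linarith) (by linarith)
    have : (0:ℝ) < u ^ (α - 1) := Real.rpow_pos_of_pos hu _
    linarith
  · have hβ0 : (0:ℝ) ≤ α - 1 := by linarith
    have hβ1 : α - 1 ≤ 1 := by linarith
    have hsub : (s + u) ^ (α - 1) ≤ (s - u) ^ (α - 1) + (2 * u) ^ (α - 1) := by
      have := real_rpow_add_le_add_rpow (x := s - u) (y := 2 * u) hsu.le (by linarith) hβ0 hβ1
      have he : s - u + 2 * u = s + u := by ring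
      rwa [he] at this
    have h2u : (2 * u) ^ (α - 1) < 2 * u ^ (α - 1) := by
      rw [Real.mul_rpow (by norm_num) hu.le]
      have h2 : (2:ℝ) ^ (α - 1) < 2 ^ (1:ℝ) :=
        Real.rpow_lt_rpow_of_exponent_lt one_lt_two (by linarith)
      rw [Real.rpow_one] at h2
      exact mul_lt_mul_of_pos_right h2 (Real.rpow_pos_of_pos hu _)
    linarith

/-- Strict positivity for `0 < t < s`. -/
lemma subfbm_aux {α s t : ℝ} (hα0 : 0 < α) (hα2 : α < 2) (ht : 0 < t) (hts : t < s) :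
    0 < s ^ α + t ^ α - (1/2) * ((s + t) ^ α + (s - t) ^ α) := by
  set F : ℝ → ℝ := fun u => s ^ α + u ^ α - (1/2) * ((s + u) ^ α + (s - u) ^ α) with hF
  have hs : 0 < s := lt_trans ht hts
  have hcont : ContinuousOn F (Set.Icc 0 t) := by
    apply ContinuousOn.sub
    · apply ContinuousOn.add continuousOn_const
      exact fun x _ => (Real.continuousAt_rpow_const x α (Or.inr hα0.le)).continuousWithinAt
    · apply ContinuousOn.mul continuousOn_const
      apply ContinuousOn.add
      · exact fun x _ => ((Real.continuousAt_rpow_const (s + x) α (Or.inr hα0.le)).comp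
          (continuousAt_const.add continuousAt_id)).continuousWithinAt
      · exact fun x _ => ((Real.continuousAt_rpow_const (s - x) α (Or.inr hα0.le)).comp
          (continuousAt_const.sub continuousAt_id)).continuousWithinAt
  have hderiv : ∀ u ∈ Set.Ioo (0:ℝ) t, HasDerivAt F
      (α * u ^ (α - 1) - (1/2) * (α * (s + u) ^ (α - 1) - α * (s - u) ^ (α - 1))) u := by
    intro u hu
    have hu0 : 0 < u := hu.1
    have hus : u < s := lt_trans hu.2 hts
    have h1 : HasDerivAt (fun u : ℝ => u ^ α) (α * u ^ (α - 1)) u :=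
      Real.hasDerivAt_rpow_const (Or.inl hu0.ne')
    have h2 : HasDerivAt (fun u : ℝ => (s + u) ^ α) (α * (s + u) ^ (α - 1)) u := by
      have := (Real.hasDerivAt_rpow_const (p := α) (x := s + u)
        (Or.inl (by positivity))).comp u ((hasDerivAt_const u s).add (hasDerivAt_id u))
      simpa [Function.comp_def] using this
    have h3 : HasDerivAt (fun u : ℝ => (s - u) ^ α) (α * (s - u) ^ (α - 1) * (-1)) u := by
      have hne : s - u ≠ 0 := by intro h; linarith [sub_eq_zero.mp h]
      have hin : HasDerivAt (fun x : ℝ => s - x) (-1) u := (hasDerivAt_id u).const_sub s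
      have := (Real.hasDerivAt_rpow_const (p := α) (x := s - u) (Or.inl hne)).comp u hin
      simpa [Function.comp_def] using this
    have := ((hasDerivAt_const u (s ^ α)).add h1).sub
      ((hasDerivAt_const u (1/2:ℝ)).mul (h2.add h3))
    convert this using 1
    · rfl
    · rfl
    · rfl
    ring
  have hmono : StrictMonoOn F (Set.Icc 0 t) := by
    apply strictMonoOn_of_deriv_pos (convex_Icc 0 t) hcont
    intro u hu
    rw [interior_Icc] at hu
    rw [(hderiv u hu).deriv]
    have hu0 : 0 < u := hu.1
    have hus : u < s := lt_trans hu.2 hts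
    have hk := key_ineq hα0 hα2 hu0 hus
    have hup : 0 < u ^ (α - 1) := Real.rpow_pos_of_pos hu0 _
    nlinarith [hk, hα0, hup]
  have hF0 : F 0 = 0 := by
    simp only [hF]
    rw [Real.zero_rpow hα0.ne']
    ring_nf
  have := hmono (Set.left_mem_Icc.2 ht.le) (Set.right_mem_Icc.2 ht.le) ht
  rw [hF0] at this
  exact this

/-- For `H ∈ (0,1)` and `s, t > 0`, the sub-fractional covariance is strictly positive. -/
theorem subfbm_covariance_pos (H : ℝ) (hH : H ∈ Set.Ioo (0 : ℝ) 1)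
    (s t : ℝ) (hs : 0 < s) (ht : 0 < t) :
    0 < s ^ (2*H) + t ^ (2*H) - (1/2) * ((s + t) ^ (2*H) + |s - t| ^ (2*H)) := by
  obtain ⟨hH0, hH1⟩ := hH
  set α := 2 * H with hα
  have hα0 : 0 < α := by positivity
  have hα2 : α < 2 := by simp only [hα]; linarith
  rcases lt_trichotomy s t with h | h | h
  · have habs : |s - t| = t - s := by rw [abs_of_neg (by linarith : s - t < 0), neg_sub]
    rw [habs]
    have := subfbm_aux hα0 hα2 hs h
    have hc : s + t = t + s := by ring
    rw [hc]
    linarith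
  · subst h
    have habs : |s - s| = 0 := by simp
    rw [habs, Real.zero_rpow hα0.ne']
    have h2s : (s + s) ^ α = 2 ^ α * s ^ α := by
      rw [show s + s = 2 * s by ring, Real.mul_rpow (by norm_num) hs.le]
    rw [h2s]
    have hsp : 0 < s ^ α := Real.rpow_pos_of_pos hs _
    have h2 : (2:ℝ) ^ α < 2 ^ (2:ℝ) := Real.rpow_lt_rpow_of_exponent_lt one_lt_two hα2
    have : (2:ℝ) ^ (2:ℝ) = 4 := by
      rw [show (2:ℝ) = ((2:ℕ):ℝ) by norm_num, Real.rpow_natCast]; norm_num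
    rw [this] at h2
    nlinarith
  · have habs : |s - t| = s - t := by rw [abs_of_pos (by linarith)]
    rw [habs]
    have := subfbm_aux hα0 hα2 ht h
    linarith
end

section
/- Let H ∈ (1/2, 1) and β_H = 2 - 2^{2H-1}. For all 0 ≤ s ≤ t, the second moment of the sub-fBm increment, V(s,t) = C_H(t,t) + C_H(s,s) - 2C_H(s,t), satisfies β_H (t-s)^{2H} ≤ V(s,t) ≤ (t-s)^{2H}, where C_H(s,t) = s^{2H} + t^{2H} - (1/2)[(s+t)^{2H} + |s-t|^{2H}]. -/
open Real Set

private noncomputable def gAux (b c q : ℝ) : ℝ → ℝ :=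
  fun u => (b + u) ^ q - (b - u) ^ q - c * u ^ q

private noncomputable def FAux (b c p : ℝ) : ℝ → ℝ :=
  fun u => (b + u) ^ p + (b - u) ^ p - 2 * b ^ p - c * u ^ p

private lemma rpow_key {p a b : ℝ} (hp1 : 1 < p) (hp2 : p < 2) (ha : 0 ≤ a) (hab : a ≤ b) :
    (b + a) ^ p + (b - a) ^ p ≤ 2 * b ^ p + (2 ^ p - 2) * a ^ p := by
  have hp0 : 0 < p := by linarith
  have hb : 0 ≤ b := ha.trans hab
  rcases hb.eq_or_lt with hb0 | hb0
  · have ha0 : a = 0 := le_antisymm (hab.trans hb0.symm.le) ha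
    subst ha0; rw [← hb0]
    simp [Real.zero_rpow hp0.ne']
  have hq0 : 0 < p - 1 := by linarith
  have hq1 : p - 1 < 1 := by linarith
  have hc : 0 < (2:ℝ) ^ p - 2 := by
    have h := Real.rpow_lt_rpow_of_exponent_lt (x := (2:ℝ)) one_lt_two hp1
    rw [Real.rpow_one] at h; linarith
  obtain ⟨c, hcdef⟩ : ∃ c : ℝ, c = (2:ℝ) ^ p - 2 := ⟨_, rfl⟩
  rw [← hcdef] at hc
  set g := gAux b c (p-1) with hgdef
  set F := FAux b c p with hFdef
  have hgeq : ∀ u, g u = (b + u) ^ (p-1) - (b - u) ^ (p-1) - c * u ^ (p-1) := fun u => rfl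
  have hFeq : ∀ u, F u = (b + u) ^ p + (b - u) ^ p - 2 * b ^ p - c * u ^ p := fun u => rfl
  have hg0 : g 0 = 0 := by
    rw [hgeq 0, add_zero, sub_zero, Real.zero_rpow hq0.ne']
    ring
  have hF0 : F 0 = 0 := by
    rw [hFeq 0, add_zero, sub_zero, Real.zero_rpow hp0.ne']
    ring
  have hFb : F b = 0 := by
    rw [hFeq b, sub_self, Real.zero_rpow hp0.ne', show b + b = 2*b by ring,
      Real.mul_rpow (by norm_num) hb, hcdef]
    ring
  -- derivative of F
  have hFderiv : ∀ u : ℝ, HasDerivAt F (p * g u) u := by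
    intro u
    have h1 : HasDerivAt (fun u : ℝ => (b + u) ^ p) (1 * p * (b + u) ^ (p-1)) u :=
      ((hasDerivAt_id u).const_add b).rpow_const (Or.inr hp1.le)
    have h2 : HasDerivAt (fun u : ℝ => (b - u) ^ p) ((-1) * p * (b - u) ^ (p-1)) u :=
      ((hasDerivAt_id u).const_sub b).rpow_const (Or.inr hp1.le)
    have h3 : HasDerivAt (fun u : ℝ => u ^ p) (1 * p * u ^ (p-1)) u :=
      (hasDerivAt_id u).rpow_const (Or.inr hp1.le)
    have h := ((h1.add h2).sub (hasDerivAt_const u (2 * b ^ p))).sub (h3.const_mul c)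
    exact h.congr_deriv (by simp only [hgeq]; ring)
  -- continuity of g
  have hgcont : Continuous g := by
    refine Continuous.sub (Continuous.sub ?_ ?_) ?_
    · exact (continuous_const.add continuous_id).rpow_const fun x => Or.inr hq0.le
    · exact (continuous_const.sub continuous_id).rpow_const fun x => Or.inr hq0.le
    · exact continuous_const.mul (continuous_id.rpow_const fun x => Or.inr hq0.le)
  have hgint : ∀ x y : ℝ, IntervalIntegrable (fun u => p * g u) MeasureTheory.volume x y :=
    fun x y => (continuous_const.mul hgcont).intervalIntegrable x y
  -- convexity of g on [0, b]
  have hgconv : ConvexOn ℝ (Icc 0 b) g := by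
    refine convexOn_of_hasDerivWithinAt2_nonneg (convex_Icc 0 b) hgcont.continuousOn
      (f' := fun x => 1 * (p-1) * (b + x) ^ (p-1-1) - (-1) * (p-1) * (b - x) ^ (p-1-1)
        - c * (1 * (p-1) * x ^ (p-1-1)))
      (f'' := fun x => 1 * (p-1-1) * (b + x) ^ (p-1-1-1) * (1 * (p-1))
        - (-1) * (p-1-1) * (b - x) ^ (p-1-1-1) * ((-1) * (p-1))
        - c * (1 * (p-1-1) * x ^ (p-1-1-1) * (1 * (p-1)))) ?_ ?_ ?_
    · intro x hx
      rw [interior_Icc] at hx ⊢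
      obtain ⟨hx0, hxb⟩ := hx
      have e1 : b + x ≠ 0 := by positivity
      have e2 : b - x ≠ 0 := sub_ne_zero.2 (ne_of_gt hxb)
      have h1 : HasDerivAt (fun u : ℝ => (b + u) ^ (p-1)) (1 * (p-1) * (b + x) ^ (p-1-1)) x :=
        ((hasDerivAt_id x).const_add b).rpow_const (Or.inl e1)
      have h2 : HasDerivAt (fun u : ℝ => (b - u) ^ (p-1)) ((-1) * (p-1) * (b - x) ^ (p-1-1)) x :=
        ((hasDerivAt_id x).const_sub b).rpow_const (Or.inl e2)
      have h3 : HasDerivAt (fun u : ℝ => u ^ (p-1)) (1 * (p-1) * x ^ (p-1-1)) x :=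
        (hasDerivAt_id x).rpow_const (Or.inl hx0.ne')
      exact ((h1.sub h2).sub (h3.const_mul c)).hasDerivWithinAt
    · intro x hx
      rw [interior_Icc] at hx ⊢
      obtain ⟨hx0, hxb⟩ := hx
      have e1 : b + x ≠ 0 := by positivity
      have e2 : b - x ≠ 0 := sub_ne_zero.2 (ne_of_gt hxb)
      have h1 : HasDerivAt (fun u : ℝ => (b + u) ^ (p-1-1)) (1 * (p-1-1) * (b + x) ^ (p-1-1-1)) x :=
        ((hasDerivAt_id x).const_add b).rpow_const (Or.inl e1)
      have h2 : HasDerivAt (fun u : ℝ => (b - u) ^ (p-1-1)) ((-1) * (p-1-1) * (b - x) ^ (p-1-1-1)) x :=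
        ((hasDerivAt_id x).const_sub b).rpow_const (Or.inl e2)
      have h3 : HasDerivAt (fun u : ℝ => u ^ (p-1-1)) (1 * (p-1-1) * x ^ (p-1-1-1)) x :=
        (hasDerivAt_id x).rpow_const (Or.inl hx0.ne')
      have h := ((h1.const_mul (1 * (p-1))).sub (h2.const_mul ((-1) * (p-1)))).sub
        ((h3.const_mul (1 * (p-1))).const_mul c)
      exact (h.congr_deriv (by ring)).hasDerivWithinAt
    · intro x hx
      rw [interior_Icc] at hx
      obtain ⟨hx0, hxb⟩ := hx
      have hle : (b + x) ^ (p-1-1-1) ≤ (b - x) ^ (p-1-1-1) :=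
        Real.rpow_le_rpow_of_nonpos (by linarith) (by linarith) (by linarith)
      have hxn : (0:ℝ) ≤ x ^ (p-1-1-1) := Real.rpow_nonneg hx0.le _
      have hA : (0:ℝ) ≤ (p-1) * (2-p) := by nlinarith
      have hB : (0:ℝ) ≤ (p-1) * (2-p) * ((b - x) ^ (p-1-1-1) - (b + x) ^ (p-1-1-1)) :=
        mul_nonneg hA (by linarith)
      have hD : (0:ℝ) ≤ (p-1) * (2-p) * (c * x ^ (p-1-1-1)) :=
        mul_nonneg hA (mul_nonneg hc.le hxn)
      show (0:ℝ) ≤ 1 * (p-1-1) * (b + x) ^ (p-1-1-1) * (1 * (p-1))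
        - (-1) * (p-1-1) * (b - x) ^ (p-1-1-1) * ((-1) * (p-1))
        - c * (1 * (p-1-1) * x ^ (p-1-1-1) * (1 * (p-1)))
      nlinarith [hB, hD]
  -- the two cases
  have hmem0 : (0:ℝ) ∈ Icc (0:ℝ) b := ⟨le_refl _, hb⟩
  have hmema : a ∈ Icc (0:ℝ) b := ⟨ha, hab⟩
  have hmain : F a ≤ 0 := by
    rcases ha.eq_or_lt with rfl | hapos
    · exact le_of_eq hF0
    rcases le_or_gt (g a) 0 with hga | hga
    · -- g ≤ 0 on [0,a], so F a = ∫₀ᵃ p g ≤ 0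
      have hgnp : ∀ u ∈ Icc (0:ℝ) a, g u ≤ 0 := by
        intro u hu
        have hw1 : (0:ℝ) ≤ 1 - u/a := by
          rw [sub_nonneg]
          exact (div_le_one hapos).2 hu.2
        have hw2 : (0:ℝ) ≤ u/a := div_nonneg hu.1 hapos.le
        have h := hgconv.2 hmem0 hmema hw1 hw2 (by ring)
        rw [smul_eq_mul, smul_eq_mul, smul_eq_mul, smul_eq_mul, mul_zero, zero_add] at h
        rw [show u/a * a = u by field_simp] at h
        rw [hg0, mul_zero, zero_add] at h
        have h2 : u/a * g a ≤ 0 := mul_nonpos_iff.2 (Or.inl ⟨hw2, hga⟩)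
        linarith
      have hFTC : ∫ u in (0:ℝ)..a, p * g u = F a - F 0 :=
        intervalIntegral.integral_eq_sub_of_hasDerivAt (fun x _ => hFderiv x) (hgint 0 a)
      have h1 : (0:ℝ) ≤ ∫ u in (0:ℝ)..a, -(p * g u) :=
        intervalIntegral.integral_nonneg hapos.le
          (fun u hu => by nlinarith [hgnp u hu])
      rw [intervalIntegral.integral_neg] at h1
      linarith
    · -- g ≥ 0 on [a,b], so F a = F b - ∫ₐᵇ p g ≤ 0
      have hgnn : ∀ u ∈ Icc a b, 0 ≤ g u := by
        intro u hu
        have hupos : 0 < u := lt_of_lt_of_le hapos hu.1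
        have hw1 : (0:ℝ) ≤ 1 - a/u := by
          rw [sub_nonneg]
          exact (div_le_one hupos).2 hu.1
        have hw2 : (0:ℝ) ≤ a/u := div_nonneg ha hupos.le
        have hmemu : u ∈ Icc (0:ℝ) b := ⟨hupos.le, hu.2⟩
        have h := hgconv.2 hmem0 hmemu hw1 hw2 (by ring)
        rw [smul_eq_mul, smul_eq_mul, smul_eq_mul, smul_eq_mul, mul_zero, zero_add] at h
        rw [show a/u * u = a by field_simp] at h
        rw [hg0, mul_zero, zero_add] at h
        by_contra hgu
        push_neg at hgu
        have h2 : a/u * g u ≤ 0 := mul_nonpos_iff.2 (Or.inl ⟨hw2, hgu.le⟩)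
        linarith
      have hFTC : ∫ u in a..b, p * g u = F b - F a :=
        intervalIntegral.integral_eq_sub_of_hasDerivAt (fun x _ => hFderiv x) (hgint a b)
      have h1 : (0:ℝ) ≤ ∫ u in a..b, p * g u :=
        intervalIntegral.integral_nonneg hab
          (fun u hu => mul_nonneg hp0.le (hgnn u hu))
      linarith
  have hFa : F a = (b + a) ^ p + (b - a) ^ p - (2 * b ^ p + ((2:ℝ) ^ p - 2) * a ^ p) := by
    rw [hFeq a, hcdef]; ring
  rw [hFa] at hmain
  linarith

/-- For `H ∈ (1/2,1)` and `0 ≤ s ≤ t`, the second moment of the sub-fBm increment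
`V(s,t) = C_H(t,t) + C_H(s,s) - 2 C_H(s,t)` satisfies
`β_H (t-s)^{2H} ≤ V(s,t) ≤ (t-s)^{2H}` where `β_H = 2 - 2^{2H-1}`. -/
theorem subfbm_increment_variance_bounds_high (H : ℝ) (hH : H ∈ Set.Ioo (1/2 : ℝ) 1)
    (βH : ℝ) (hβH : βH = 2 - 2 ^ (2*H - 1))
    (C : ℝ → ℝ → ℝ)
    (hC : ∀ s t : ℝ, C s t =
      s ^ (2*H) + t ^ (2*H) - (1/2) * ((s + t) ^ (2*H) + |s - t| ^ (2*H)))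
    (s t : ℝ) (hs : 0 ≤ s) (hst : s ≤ t) :
    βH * (t - s) ^ (2*H) ≤ C t t + C s s - 2 * C s t ∧
      C t t + C s s - 2 * C s t ≤ (t - s) ^ (2*H) := by
  obtain ⟨hH1, hH2⟩ := hH
  have hp1 : 1 < 2*H := by linarith
  have hp2 : 2*H < 2 := by linarith
  have ht0 : 0 ≤ t := hs.trans hst
  have e0 : (0:ℝ) ^ (2*H) = 0 := Real.zero_rpow (by positivity)
  have ett : (t + t) ^ (2*H) = 2 ^ (2*H) * t ^ (2*H) := by
    rw [show t + t = 2*t by ring, Real.mul_rpow (by norm_num) ht0]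
  have ess : (s + s) ^ (2*H) = 2 ^ (2*H) * s ^ (2*H) := by
    rw [show s + s = 2*s by ring, Real.mul_rpow (by norm_num) hs]
  have e2 : (2:ℝ) ^ (2*H) = 2 * 2 ^ (2*H - 1) := by
    rw [show 2*H = 1 + (2*H - 1) by ring, Real.rpow_add two_pos, Real.rpow_one]
    ring_nf
  -- lower bound key
  have key := rpow_key hp1 hp2 (sub_nonneg.2 hst) (show t - s ≤ s + t by linarith)
  rw [show s + t + (t - s) = 2*t by ring, show s + t - (t - s) = 2*s by ring,
    Real.mul_rpow (by norm_num) ht0, Real.mul_rpow (by norm_num) hs, e2] at key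
  -- upper bound : convexity
  have hconv := (convexOn_rpow (p := 2*H) hp1.le).2 (Set.mem_Ici.2 hs) (Set.mem_Ici.2 ht0)
    (by norm_num : (0:ℝ) ≤ 1/2) (by norm_num : (0:ℝ) ≤ 1/2) (by norm_num)
  simp only [smul_eq_mul] at hconv
  have hst2 : (s + t) ^ (2*H) = 2 ^ (2*H) * (1/2*s + 1/2*t) ^ (2*H) := by
    rw [show s + t = 2*(1/2*s + 1/2*t) by ring, Real.mul_rpow (by norm_num) (by linarith)]
  have hupper : (s + t) ^ (2*H) ≤ 2 ^ (2*H - 1) * (s ^ (2*H) + t ^ (2*H)) := by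
    rw [hst2, e2]
    nlinarith [Real.rpow_nonneg (show (0:ℝ) ≤ 2 by norm_num) (2*H - 1)]
  have habs : |s - t| = t - s := by
    rw [abs_sub_comm]; exact abs_of_nonneg (sub_nonneg.2 hst)
  rw [hC t t, hC s s, hC s t, sub_self t, sub_self s, abs_zero, habs,
    e0, ett, ess, e2, hβH]
  constructor <;> linarith
end

section
/- Let H ∈ (0, 1/2) and β_H = 2 - 2^{2H-1}. For all 0 ≤ s ≤ t, the increment second moment V(s,t) = -2^{2H-1}(t^{2H} + s^{2H}) + (s+t)^{2H} + (t-s)^{2H} satisfies (t-s)^{2H} ≤ V(s,t) ≤ β_H (t-s)^{2H}. -/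
open Real Set

/-- Lower auxiliary: `2^(α-1)(t^α+s^α) ≤ (s+t)^α` for `α ∈ (0,1)`, `s,t ≥ 0`. -/
lemma sfbm_lower_aux (α : ℝ) (hα0 : 0 < α) (hα1 : α < 1) (s t : ℝ) (hs : 0 ≤ s) (ht : 0 ≤ t) :
    (2:ℝ) ^ (α - 1) * (t ^ α + s ^ α) ≤ (s + t) ^ α := by
  have hcon := (Real.concaveOn_rpow hα0.le hα1.le).2 (mem_Ici.2 hs) (mem_Ici.2 ht)
    (by norm_num : (0:ℝ) ≤ 1/2) (by norm_num : (0:ℝ) ≤ 1/2) (by norm_num)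
  simp only [smul_eq_mul] at hcon
  have hmid : ((1:ℝ)/2 * s + 1/2 * t) = (s + t)/2 := by ring
  rw [hmid] at hcon
  have hsplit : (s + t) ^ α = 2 ^ α * ((s + t)/2) ^ α := by
    rw [← Real.mul_rpow (by norm_num) (by positivity)]
    ring_nf
  have h2α : (2:ℝ) ^ α = 2 * 2 ^ (α - 1) := by
    have h : (2:ℝ) ^ α = 2 ^ (1 + (α - 1)) := by norm_num
    rw [h, Real.rpow_add (by norm_num), Real.rpow_one]
  have hpos : (0:ℝ) < 2 ^ (α - 1) := Real.rpow_pos_of_pos (by norm_num) _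
  calc (2:ℝ) ^ (α - 1) * (t ^ α + s ^ α)
      = 2 * 2 ^ (α - 1) * (1/2 * s ^ α + 1/2 * t ^ α) := by ring
    _ ≤ 2 * 2 ^ (α - 1) * ((s + t)/2) ^ α :=
        mul_le_mul_of_nonneg_left hcon (by positivity)
    _ = 2 ^ α * ((s + t)/2) ^ α := by rw [← h2α]
    _ = (s + t) ^ α := hsplit.symm

/-- Key upper auxiliary: for `α ∈ (0,1)`, `0 ≤ s ≤ t`, `t > 0`,
`(s+t)^α ≤ 2^(α-1) s^α + 2^(α-1) t^α + (1 - 2^(α-1)) (t-s)^α`. -/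
lemma sfbm_upper_aux (α : ℝ) (hα0 : 0 < α) (hα1 : α < 1) (s t : ℝ) (hs : 0 ≤ s)
    (hst : s ≤ t) (ht : 0 < t) :
    (s + t) ^ α ≤ 2 ^ (α - 1) * s ^ α + 2 ^ (α - 1) * t ^ α + (1 - 2 ^ (α - 1)) * (t - s) ^ α := by
  set c : ℝ := 2 ^ (α - 1) with hc
  have hc0 : 0 < c := Real.rpow_pos_of_pos (by norm_num) _
  have hc1 : c < 1 := Real.rpow_lt_one_of_one_lt_of_neg (by norm_num) (by linarith)
  set φ : ℝ → ℝ := fun x => c * x ^ α + c * t ^ α + (1 - c) * (t - x) ^ α - (x + t) ^ α with hφ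
  set φ' : ℝ → ℝ := fun x =>
    (c * (α * x ^ (α - 1)) + 0) + (1 - c) * (-1 * α * (t - x) ^ (α - 1))
      - 1 * α * (x + t) ^ (α - 1) with hφ'
  set φ'' : ℝ → ℝ := fun x =>
    α * (α - 1) * (c * x ^ (α - 2) + (1 - c) * (t - x) ^ (α - 2) - (x + t) ^ (α - 2)) with hφ''
  have hconc : ConcaveOn ℝ (Icc (0:ℝ) t) φ := by
    apply concaveOn_of_hasDerivWithinAt2_nonpos (f' := φ') (f'' := φ'') (convex_Icc _ _)
    · -- continuity of φ on Icc 0 t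
      apply ContinuousOn.sub
      apply ContinuousOn.add
      apply ContinuousOn.add
      · exact (continuous_const.mul (Real.continuous_rpow_const hα0.le)).continuousOn
      · exact continuousOn_const
      · exact (continuous_const.mul ((Real.continuous_rpow_const hα0.le).comp
          (continuous_const.sub continuous_id))).continuousOn
      · exact ((Real.continuous_rpow_const hα0.le).comp
          (continuous_id.add continuous_const)).continuousOn
    · -- first derivative
      rw [interior_Icc]
      intro x hx
      have hx0 : x ≠ 0 := ne_of_gt hx.1
      have htx : t - x ≠ 0 := ne_of_gt (by linarith [hx.2])
      have hxt : x + t ≠ 0 := ne_of_gt (by linarith [hx.1])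
      have h1 : HasDerivAt (fun x : ℝ => x ^ α) (α * x ^ (α - 1)) x :=
        Real.hasDerivAt_rpow_const (Or.inl hx0)
      have h2 : HasDerivAt (fun x : ℝ => (t - x) ^ α) (-1 * α * (t - x) ^ (α - 1)) x :=
        ((hasDerivAt_id x).const_sub t).rpow_const (Or.inl htx)
      have h3 : HasDerivAt (fun x : ℝ => (x + t) ^ α) (1 * α * (x + t) ^ (α - 1)) x :=
        ((hasDerivAt_id x).add_const t).rpow_const (Or.inl hxt)
      exact ((((h1.const_mul c).add (hasDerivAt_const x (c * t ^ α))).add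
        (h2.const_mul (1 - c))).sub h3).hasDerivWithinAt
    · -- second derivative
      rw [interior_Icc]
      intro x hx
      have hx0 : x ≠ 0 := ne_of_gt hx.1
      have htx : t - x ≠ 0 := ne_of_gt (by linarith [hx.2])
      have hxt : x + t ≠ 0 := ne_of_gt (by linarith [hx.1])
      have h1 : HasDerivAt (fun x : ℝ => x ^ (α - 1)) ((α - 1) * x ^ (α - 2)) x := by
        have h := Real.hasDerivAt_rpow_const (p := α - 1) (Or.inl hx0)
        rwa [show α - 1 - 1 = α - 2 by ring] at h
      have h2 : HasDerivAt (fun x : ℝ => (t - x) ^ (α - 1))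
          (-1 * (α - 1) * (t - x) ^ (α - 2)) x := by
        have h := ((hasDerivAt_id x).const_sub t).rpow_const (p := α - 1) (Or.inl htx)
        rwa [show α - 1 - 1 = α - 2 by ring] at h
      have h3 : HasDerivAt (fun x : ℝ => (x + t) ^ (α - 1))
          (1 * (α - 1) * (x + t) ^ (α - 2)) x := by
        have h := ((hasDerivAt_id x).add_const t).rpow_const (p := α - 1) (Or.inl hxt)
        rwa [show α - 1 - 1 = α - 2 by ring] at h
      have hbig := ((((h1.const_mul α).const_mul c).add (hasDerivAt_const x (0:ℝ))).add
        ((h2.const_mul (-1 * α)).const_mul (1 - c))).sub (h3.const_mul (1 * α))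
      have hval : φ'' x = (c * (α * ((α - 1) * x ^ (α - 2))) + 0) +
          (1 - c) * (-1 * α * (-1 * (α - 1) * (t - x) ^ (α - 2)))
          - 1 * α * (1 * (α - 1) * (x + t) ^ (α - 2)) := by
        simp only [hφ'']; ring
      rw [hval]
      exact hbig.hasDerivWithinAt
    · -- nonpositivity of φ''
      rw [interior_Icc]
      intro x hx
      have hxa : (x + t) ^ (α - 2) ≤ x ^ (α - 2) :=
        Real.rpow_le_rpow_of_nonpos hx.1 (by linarith) (by linarith)
      have hxb : (x + t) ^ (α - 2) ≤ (t - x) ^ (α - 2) :=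
        Real.rpow_le_rpow_of_nonpos (by linarith [hx.2]) (by linarith [hx.1, hx.2]) (by linarith)
      have hbr : 0 ≤ c * x ^ (α - 2) + (1 - c) * (t - x) ^ (α - 2) - (x + t) ^ (α - 2) := by
        nlinarith [hxa, hxb, hc0, hc1]
      have hneg : α * (α - 1) ≤ 0 := by nlinarith
      simp only [hφ'']
      exact mul_nonpos_of_nonpos_of_nonneg hneg hbr
  -- φ vanishes at the endpoints
  have h0 : φ 0 = 0 := by
    simp only [hφ]
    rw [Real.zero_rpow (ne_of_gt hα0)]
    rw [sub_zero, zero_add]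
    ring
  have htt : φ t = 0 := by
    simp only [hφ]
    rw [sub_self, Real.zero_rpow (ne_of_gt hα0)]
    have h2t : (t + t) ^ α = 2 ^ α * t ^ α := by
      rw [← Real.mul_rpow (by norm_num) ht.le]
      ring_nf
    have h2α : (2:ℝ) ^ α = 2 * c := by
      have h : (2:ℝ) ^ α = 2 ^ (1 + (α - 1)) := by norm_num
      rw [h, Real.rpow_add (by norm_num), Real.rpow_one, hc]
    rw [h2t, h2α]
    ring
  -- conclude by concavity: φ s ≥ (1 - s/t) φ 0 + (s/t) φ t = 0
  have ha : 0 ≤ 1 - s / t := by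
    have : s / t ≤ 1 := (div_le_one ht).2 hst
    linarith
  have hb : 0 ≤ s / t := div_nonneg hs ht.le
  have hkey := hconc.2 (left_mem_Icc.2 ht.le) (right_mem_Icc.2 ht.le) ha hb (by ring)
  rw [h0, htt] at hkey
  simp only [smul_eq_mul, mul_zero, zero_add, add_zero] at hkey
  rw [div_mul_cancel₀ s (ne_of_gt ht)] at hkey
  have hφs : 0 ≤ φ s := by linarith [hkey]
  simp only [hφ] at hφs
  linarith [hφs]

/-- For `H ∈ (0,1/2)` and `0 ≤ s ≤ t`, the increment second moment
`V(s,t) = -2^{2H-1}(t^{2H}+s^{2H}) + (s+t)^{2H} + (t-s)^{2H}` satisfies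
`(t-s)^{2H} ≤ V(s,t) ≤ β_H (t-s)^{2H}` where `β_H = 2 - 2^{2H-1}`. -/
theorem subfbm_increment_variance_bounds_low (H : ℝ) (hH : H ∈ Set.Ioo (0 : ℝ) (1/2))
    (βH : ℝ) (hβH : βH = 2 - 2 ^ (2*H - 1))
    (V : ℝ → ℝ → ℝ)
    (hV : ∀ s t : ℝ, V s t =
      -(2 ^ (2*H - 1)) * (t ^ (2*H) + s ^ (2*H)) + (s + t) ^ (2*H) + (t - s) ^ (2*H))
    (s t : ℝ) (hs : 0 ≤ s) (hst : s ≤ t) :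
    (t - s) ^ (2*H) ≤ V s t ∧ V s t ≤ βH * (t - s) ^ (2*H) := by
  obtain ⟨hH0, hH1⟩ := hH
  have hα0 : 0 < 2 * H := by linarith
  have hα1 : 2 * H < 1 := by linarith
  rw [hV, hβH]
  rcases eq_or_lt_of_le (hs.trans hst) with ht | ht
  · -- t = 0, hence s = 0
    have hs0 : s = 0 := le_antisymm (hst.trans ht.symm.le) hs
    subst hs0
    rw [← ht]
    simp [Real.zero_rpow (ne_of_gt hα0)]
  · constructor
    · have hlow := sfbm_lower_aux (2*H) hα0 hα1 s t hs (hs.trans hst)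
      linarith [hlow]
    · have hup := sfbm_upper_aux (2*H) hα0 hα1 s t hs hst ht
      linarith [hup]
end
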